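/- The family of IP-subsets of ℤ has the Ramsey property: if A is an IP-set in ℤ and A = A₁ ∪ A₂, then A₁ or A₂ contains an IP-set. -/

import Mathlib

open Set Pointwise

/-- The set of finite sums of a sequence of integers. -/
def FS (n : ℕ → ℤ) : Set ℤ :=
  {m | ∃ s : Finset ℕ, s.Nonempty ∧ m = ∑ i ∈ s, n i}

/-- `A` is an IP-set if it contains all finite sums of some integer sequence. -/
def IsIPSet (A : Set ℤ) : Prop := ∃ n : ℕ → ℤ, FS n ⊆ A

/-- `B` is an IP*-set if it meets every IP-set. -/
def IsIPStar (B : Set ℤ) : Prop := ∀ A : Set ℤ, IsIPSet A → (B ∩ A).Nonempty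

/-- `α < β` for finite subsets of ℕ: every element of `α` is less than every element of `β`. -/
def FinsetLt (α β : Finset ℕ) : Prop := ∀ x ∈ α, ∀ y ∈ β, x < y

/-- A sequence `α₁ < α₂ < ⋯` of nonempty finite subsets of ℕ generating an IP-ring. -/
def IsIPRingSeq (a : ℕ → Finset ℕ) : Prop :=
  (∀ i, (a i).Nonempty) ∧ ∀ i, FinsetLt (a i) (a (i + 1))

/-- The IP-ring `FU((αᵢ))`: all finite unions of the `αᵢ`. -/
def FU (a : ℕ → Finset ℕ) : Set (Finset ℕ) :=
  {s | ∃ β : Finset ℕ, β.Nonempty ∧ s = β.biUnion a}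

/-- `n_α = ∑_{i ∈ α} nᵢ`. -/
def sumIdx (n : ℕ → ℤ) (α : Finset ℕ) : ℤ := ∑ i ∈ α, n i

/-- The family `𝒢_A` of subsets of ℤ containing some IP-subset of the
IP-set `A = {n_α}_{α ∈ ℱ}`. -/
def GA (n : ℕ → ℤ) : Set (Set ℤ) :=
  {B | ∃ a : ℕ → Finset ℕ, IsIPRingSeq a ∧ sumIdx n '' FU a ⊆ B}

/-- The dual family `𝒢*`. -/
def dualFam (G : Set (Set ℤ)) : Set (Set ℤ) :=
  {B | ∀ A ∈ G, (B ∩ A).Nonempty}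

/-- Natural powers of a homeomorphism. -/
def hnpow {X : Type*} [TopologicalSpace X] (T : X ≃ₜ X) : ℕ → X ≃ₜ X
  | 0 => Homeomorph.refl X
  | (k + 1) => (hnpow T k).trans T

/-- Integer powers of a homeomorphism. -/
def hzpow {X : Type*} [TopologicalSpace X] (T : X ≃ₜ X) : ℤ → X ≃ₜ X
  | Int.ofNat k => hnpow T k
  | Int.negSucc k => (hnpow T (k + 1)).symm

/-- A homeomorphism is minimal if every (two-sided) orbit is dense. -/
def IsMinimalHomeo {X : Type*} [TopologicalSpace X] (T : X ≃ₜ X) : Prop :=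
  ∀ x : X, Dense (Set.range fun m : ℤ => hzpow T m x)

/-- `(X,T)` is mixing along the IP-set `A = {n_α}`: every `N(U,V)` belongs to `𝒢_A*`. -/
def MixingAlong {X : Type*} [TopologicalSpace X] (T : X ≃ₜ X) (n : ℕ → ℤ) : Prop :=
  ∀ U V : Set X, IsOpen U → IsOpen V → U.Nonempty → V.Nonempty →
    {m : ℤ | (U ∩ hzpow T m ⁻¹' V).Nonempty} ∈ dualFam (GA n)

/-- `(X,T)` is topologically mildly mixing: every `N(U,V)` is an IP*-set. -/
def TopMildlyMixing {X : Type*} [TopologicalSpace X] (T : X ≃ₜ X) : Prop :=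
  ∀ U V : Set X, IsOpen U → IsOpen V → U.Nonempty → V.Nonempty →
    IsIPStar {m : ℤ | (U ∩ hzpow T m ⁻¹' V).Nonempty}

/-- An integral polynomial: an integer-valued function which is given by a
polynomial (with rational coefficients) on ℤ. -/
def IsIntPoly (p : ℤ → ℤ) : Prop :=
  ∃ q : Polynomial ℚ, ∀ m : ℤ, (p m : ℚ) = q.eval (m : ℚ)

/-- Every element of Hindman's inductive `FS` is a finset sum. -/
theorem hindmanFS_subset_FS (a : Stream' ℤ) : Hindman.FS a ⊆ FS a.get := by
  intro m hm
  induction hm with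
  | head' a => exact ⟨{0}, Finset.singleton_nonempty 0, by simp [Stream'.head]⟩
  | tail' a m h ih =>
      obtain ⟨s, hs, rfl⟩ := ih
      refine ⟨s.image (· + 1), hs.image _, ?_⟩
      rw [Finset.sum_image (fun x _ y _ h => by simpa using h)]
      rfl
  | cons' a m h ih =>
      obtain ⟨s, hs, rfl⟩ := ih
      refine ⟨insert 0 (s.image (· + 1)), Finset.insert_nonempty _ _, ?_⟩
      rw [Finset.sum_insert (by simp), Finset.sum_image (fun x _ y _ h => by simpa using h)]
      rfl

theorem FS_subset_hindmanFS (a : Stream' ℤ) : FS a.get ⊆ Hindman.FS a := by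
  rintro m ⟨s, hs, rfl⟩
  exact Hindman.FS.finset_sum a s hs

/-- The family of IP-sets has the Ramsey property: if an IP-set is split into two
pieces, one of the pieces contains an IP-set. -/
theorem ipset_ramsey (A A₁ A₂ : Set ℤ) (hA : IsIPSet A) (hsplit : A = A₁ ∪ A₂) :
    IsIPSet A₁ ∨ IsIPSet A₂ := by
  obtain ⟨n, hn⟩ := hA
  have hcov : Hindman.FS (n : Stream' ℤ) ⊆ ⋃₀ {A₁, A₂} := by
    intro m hm
    have : m ∈ A := hn (hindmanFS_subset_FS _ hm)
    rw [hsplit] at this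
    simpa [Set.sUnion_insert] using this
  obtain ⟨c, hc, b, hb⟩ := Hindman.FS_partition_regular (n : Stream' ℤ) {A₁, A₂}
    (Set.toFinite _) hcov
  have hsub : FS b.get ⊆ c := fun m hm => hb (FS_subset_hindmanFS b hm)
  rcases hc with rfl | rfl
  · exact Or.inl ⟨b.get, hsub⟩
  · exact Or.inr ⟨b.get, hsub⟩
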